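/- arXiv:2407.20526 — 7 statements merged into one kernel-verified Lean document; each statement's English description precedes it below -/
import Mathlib

section
/- Let H be an m×n matrix over F_2 with maximum row weight w_c and maximum column weight w_q, and define the energy of v ∈ F_2^n as ε(v) = wt(H·v) and the energy barrier Δ(s) as the min over single-bit-flip paths from 0 to s of the max energy along the path. Then for any vector s that is a sum of vectors s_1, ..., s_k each satisfying H·s_i = 0 and wt(s_i) ≤ w_c, the energy barrier satisfies Δ(s) ≤ w_c · w_q. -/
open Matrix Kronecker

/-- Hamming weight of a vector over `ZMod 2`. -/
def wt {α : Type*} [Fintype α] (v : α → ZMod 2) : ℕ :=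
  (Finset.univ.filter fun i => v i ≠ 0).card

/-- Number of nonzero entries of a matrix over `ZMod 2`. -/
def mwt {α β : Type*} [Fintype α] [Fintype β] (M : Matrix α β (ZMod 2)) : ℕ :=
  (Finset.univ.filter fun p : α × β => M p.1 p.2 ≠ 0).card

/-- Energy barrier of a vector `s` w.r.t. parity check matrix `H`: the minimum over
single-bit-flip paths from `0` to `s` of the maximum energy `wt (H·v)` along the path. -/
noncomputable def eb {α β : Type*} [Fintype α] [Fintype β] (H : Matrix α β (ZMod 2)) (s : β → ZMod 2) : ℕ :=
  sInf {B | ∃ F : ℕ, ∃ v : Fin (F + 1) → β → ZMod 2,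
    v 0 = 0 ∧ v (Fin.last F) = s ∧
    (∀ i : Fin F, wt (v i.castSucc + v i.succ) ≤ 1) ∧
    ∀ i, wt (H.mulVec (v i)) ≤ B}

/-- Energy barrier of a classical code: minimum of `eb` over nonzero codewords. -/
noncomputable def codeEB {α β : Type*} [Fintype α] [Fintype β] (M : Matrix α β (ZMod 2)) : ℕ :=
  sInf {E | ∃ c, c ≠ 0 ∧ M.mulVec c = 0 ∧ eb M c = E}

/-- The X-type parity check matrix of the hypergraph product code. -/
def HX {r1 n1 r2 n2 : ℕ} (H1 : Matrix (Fin r1) (Fin n1) (ZMod 2))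
    (H2 : Matrix (Fin r2) (Fin n2) (ZMod 2)) :
    Matrix (Fin r1 × Fin n2) ((Fin n1 × Fin n2) ⊕ (Fin r1 × Fin r2)) (ZMod 2) :=
  Matrix.fromCols (H1 ⊗ₖ (1 : Matrix (Fin n2) (Fin n2) (ZMod 2)))
    ((1 : Matrix (Fin r1) (Fin r1) (ZMod 2)) ⊗ₖ H2ᵀ)

lemma wt_mulVec_le' {m n : ℕ} (H : Matrix (Fin m) (Fin n) (ZMod 2)) (w_q : ℕ)
    (hcol : ∀ j, wt (fun i => H i j) ≤ w_q) (u : Fin n → ZMod 2) :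
    wt (H.mulVec u) ≤ w_q * wt u := by
  classical
  unfold wt at *
  calc (Finset.univ.filter fun i => H.mulVec u i ≠ 0).card
      ≤ ((Finset.univ.filter fun j => u j ≠ 0).biUnion
          (fun j => Finset.univ.filter fun i => H i j ≠ 0)).card := by
        apply Finset.card_le_card
        intro i hi
        simp only [Finset.mem_filter, Finset.mem_univ, true_and] at hi
        rw [Finset.mem_biUnion]
        by_contra hcon
        push_neg at hcon
        apply hi
        unfold Matrix.mulVec dotProduct
        apply Finset.sum_eq_zero
        intro j _
        by_cases hu : u j = 0
        · simp [hu]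
        · have := hcon j (by simp [hu])
          simp only [Finset.mem_filter, Finset.mem_univ, true_and, not_not] at this
          simp [this]
    _ ≤ ∑ j ∈ (Finset.univ.filter fun j => u j ≠ 0),
          (Finset.univ.filter fun i => H i j ≠ 0).card := Finset.card_biUnion_le
    _ ≤ ∑ j ∈ (Finset.univ.filter fun j => u j ≠ 0), w_q :=
          Finset.sum_le_sum (fun j _ => hcol j)
    _ = w_q * (Finset.univ.filter fun j => u j ≠ 0).card := by
          rw [Finset.sum_const, smul_eq_mul, mul_comm]

lemma wt_mono {α : Type*} [Fintype α] (u v : α → ZMod 2)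
    (h : ∀ i, u i ≠ 0 → v i ≠ 0) : wt u ≤ wt v := by
  apply Finset.card_le_card
  intro i hi
  simp only [Finset.mem_filter, Finset.mem_univ, true_and] at *
  exact h i hi


theorem stmt1 {m n k : ℕ} (H : Matrix (Fin m) (Fin n) (ZMod 2)) (w_c w_q : ℕ)
    (hrow : ∀ i, wt (H i) ≤ w_c) (hcol : ∀ j, wt (fun i => H i j) ≤ w_q)
    (sgen : Fin k → Fin n → ZMod 2)
    (hker : ∀ i, H.mulVec (sgen i) = 0) (hwt : ∀ i, wt (sgen i) ≤ w_c)
    (s : Fin n → ZMod 2) (hs : s = ∑ i, sgen i) :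
    eb H s ≤ w_c * w_q := by
  classical
  subst hs
  apply Nat.sInf_le
  refine ⟨k * n, fun t j => ∑ i : Fin k,
      if (i : ℕ) * n + (j : ℕ) < (t : ℕ) then sgen i j else 0, ?_, ?_, ?_, ?_⟩
  · funext j
    simp
  · funext j
    simp only [Fin.val_last, Finset.sum_apply, Pi.zero_apply]
    apply Finset.sum_congr rfl
    intro i _
    rw [if_pos]
    calc (i : ℕ) * n + (j : ℕ) < (i : ℕ) * n + n := by omega
      _ = ((i : ℕ) + 1) * n := by ring
      _ ≤ k * n := Nat.mul_le_mul_right n i.isLt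
  · intro t
    apply Finset.card_le_one.mpr
    intro j hj j' hj'
    simp only [Finset.mem_filter, Finset.mem_univ, true_and, Pi.add_apply,
      Fin.coe_castSucc, Fin.val_succ] at hj hj'
    have key : ∀ j'' : Fin n,
        ((∑ i : Fin k, if (i : ℕ) * n + (j'' : ℕ) < (t : ℕ) then sgen i j'' else 0) +
         (∑ i : Fin k, if (i : ℕ) * n + (j'' : ℕ) < (t : ℕ) + 1 then sgen i j'' else 0)) ≠ 0 →
        (j'' : ℕ) = (t : ℕ) % n := by
      intro j'' hne
      by_contra hmod
      apply hne
      have hcond : ∀ i : Fin k,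
          ((i : ℕ) * n + (j'' : ℕ) < (t : ℕ)) ↔ ((i : ℕ) * n + (j'' : ℕ) < (t : ℕ) + 1) := by
        intro i
        constructor
        · omega
        · intro h
          rcases Nat.lt_or_ge ((i : ℕ) * n + (j'' : ℕ)) (t : ℕ) with h' | h'
          · exact h'
          · exfalso
            have heq : (i : ℕ) * n + (j'' : ℕ) = (t : ℕ) := by omega
            apply hmod
            have : (t : ℕ) % n = (j'' : ℕ) % n := by
              rw [← heq, Nat.add_comm, Nat.add_mul_mod_self_right]
            rw [this, Nat.mod_eq_of_lt j''.isLt]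
      have : (∑ i : Fin k, if (i : ℕ) * n + (j'' : ℕ) < (t : ℕ) then sgen i j'' else 0) =
             (∑ i : Fin k, if (i : ℕ) * n + (j'' : ℕ) < (t : ℕ) + 1 then sgen i j'' else 0) := by
        apply Finset.sum_congr rfl
        intro i _
        simp only [hcond i]
      rw [this]
      -- x + x = 0 in ZMod 2
      exact CharTwo.add_self_eq_zero _
    have h1 := key j hj
    have h2 := key j' hj'
    exact Fin.ext (h1.trans h2.symm)
  · intro t
    set T := (t : ℕ) with hT
    set g : Fin k → Fin n → ZMod 2 :=
      fun i j => if (i : ℕ) * n + (j : ℕ) < T then sgen i j else 0 with hg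
    have hv : (fun (j : Fin n) => ∑ i : Fin k, if (i : ℕ) * n + (j : ℕ) < T then sgen i j else 0)
        = ∑ i : Fin k, g i := by
      funext j
      simp [hg, Finset.sum_apply]
    rw [show H.mulVec (fun (j : Fin n) => ∑ i : Fin k, if (i : ℕ) * n + (j : ℕ) < T then sgen i j else 0)
        = ∑ i : Fin k, H.mulVec (g i) by
      rw [hv, ← H.mulVecLin_apply, map_sum]
      simp [Matrix.mulVecLin_apply]]
    have hzero : ∀ i : Fin k, ¬((i : ℕ) * n < T ∧ T < ((i : ℕ) + 1) * n) →
        H.mulVec (g i) = 0 := by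
      intro i hi
      push_neg at hi
      rcases le_or_gt T ((i : ℕ) * n) with h | h
      · have : g i = 0 := by
          funext j
          simp only [hg]
          rw [if_neg]
          · rfl
          · omega
        rw [this, Matrix.mulVec_zero]
      · have h2 := hi h
        have : g i = sgen i := by
          funext j
          simp only [hg]
          rw [if_pos]
          have : (i : ℕ) * n + (j : ℕ) < (i : ℕ) * n + n := by
            have := j.isLt; omega
          calc (i : ℕ) * n + (j : ℕ) < (i : ℕ) * n + n := this
            _ = ((i : ℕ) + 1) * n := by ring
            _ ≤ T := h2
        rw [this, hker i]
    by_cases hex : ∃ i0 : Fin k, (i0 : ℕ) * n < T ∧ T < ((i0 : ℕ) + 1) * n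
    · obtain ⟨i0, hi0⟩ := hex
      rw [Finset.sum_eq_single i0]
      · calc wt (H.mulVec (g i0)) ≤ w_q * wt (g i0) := wt_mulVec_le' H w_q hcol _
          _ ≤ w_q * wt (sgen i0) := by
              apply Nat.mul_le_mul_left
              apply wt_mono
              intro j hj
              simp only [hg] at hj
              by_cases hc : (i0 : ℕ) * n + (j : ℕ) < T
              · rwa [if_pos hc] at hj
              · rw [if_neg hc] at hj; exact absurd rfl hj
          _ ≤ w_q * w_c := Nat.mul_le_mul_left _ (hwt i0)
          _ = w_c * w_q := Nat.mul_comm _ _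
      · intro i _ hne
        apply hzero
        intro hi
        apply hne
        apply Fin.ext
        by_contra hvne
        rcases Nat.lt_or_ge (i : ℕ) (i0 : ℕ) with h | h
        · have : ((i : ℕ) + 1) * n ≤ (i0 : ℕ) * n := Nat.mul_le_mul_right n (by omega)
          omega
        · have hlt : (i0 : ℕ) < (i : ℕ) := by omega
          have : ((i0 : ℕ) + 1) * n ≤ (i : ℕ) * n := Nat.mul_le_mul_right n (by omega)
          omega
      · intro h
        exact absurd (Finset.mem_univ i0) h
    · push_neg at hex
      have : (∑ i : Fin k, H.mulVec (g i)) = 0 := by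
        apply Finset.sum_eq_zero
        intro i _
        apply hzero i
        intro h
        have := hex i h.1
        omega
      rw [this]
      simp [wt]
end

section
/- Let H_1 be an r_1×n_1 matrix and H_2 an r_2×n_2 matrix over F_2. Define H_X = (H_1 ⊗ I_{n_2} | I_{r_1} ⊗ H_2^T) as an (r_1·n_2) × (n_1·n_2 + r_1·r_2) matrix and H_Z = (I_{n_1} ⊗ H_2 | H_1^T ⊗ I_{r_2}) as an (n_1·r_2) × (n_1·n_2 + r_1·r_2) matrix. Then H_X · H_Z^T = 0. -/
open Matrix Kronecker

theorem stmt4 {r1 n1 r2 n2 : ℕ}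
    (H1 : Matrix (Fin r1) (Fin n1) (ZMod 2)) (H2 : Matrix (Fin r2) (Fin n2) (ZMod 2)) :
    (Matrix.fromCols (H1 ⊗ₖ (1 : Matrix (Fin n2) (Fin n2) (ZMod 2)))
        ((1 : Matrix (Fin r1) (Fin r1) (ZMod 2)) ⊗ₖ H2ᵀ)) *
      (Matrix.fromCols ((1 : Matrix (Fin n1) (Fin n1) (ZMod 2)) ⊗ₖ H2)
        (H1ᵀ ⊗ₖ (1 : Matrix (Fin r2) (Fin r2) (ZMod 2))))ᵀ = 0 := by
  rw [transpose_fromCols, fromCols_mul_fromRows]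
  simp only [← kroneckerMap_transpose, transpose_one, transpose_transpose,
    ← Matrix.mul_kronecker_mul, Matrix.one_mul, Matrix.mul_one]
  ext ⟨i,j⟩ ⟨k,l⟩
  simp [kroneckerMap_apply]
  ring_nf
  have : (H1 i k * H2 l j) + (H1 i k * H2 l j) = 0 := by
    rw [← two_mul]; simp [show (2:ZMod 2)=0 from rfl]
  linear_combination this
end

section
/- Let H_1 be r_1×n_1 and H_2 be r_2×n_2 matrices over F_2. Let Z^{(1)} be an n_1×n_2 matrix and Z^{(2)} an r_1×r_2 matrix over F_2. Let L_c ∈ F_2^{n_2} be a codeword of H_2 (H_2·L_c = 0), and define z^{1,s} = Z^{(1)}·L_c ∈ F_2^{n_1} (the sum over columns of Z^{(1)} indexed by the support of L_c). Then wt(H_1·z^{1,s}) ≤ wt(H_1·Z^{(1)} + Z^{(2)}·H_2). -/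
open Matrix Kronecker

lemma wt_mulVec_le_mwt {α β : Type*} [Fintype α] [Fintype β]
    (M : Matrix α β (ZMod 2)) (x : β → ZMod 2) :
    wt (M.mulVec x) ≤ mwt M := by
  classical
  unfold wt mwt
  have hex : ∀ j, M.mulVec x j ≠ 0 → ∃ k, M j k ≠ 0 := by
    intro j hj
    by_contra h
    push_neg at h
    apply hj
    simp only [Matrix.mulVec, dotProduct]
    apply Finset.sum_eq_zero
    intro k _
    rw [h k, zero_mul]
  rcases (Finset.univ.filter fun i => M.mulVec x i ≠ 0).eq_empty_or_nonempty with he | ⟨j0, hj0⟩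
  · rw [he]; simp
  haveI : Nonempty β := by
    simp only [Finset.mem_filter, Finset.mem_univ, true_and] at hj0
    exact ⟨(hex j0 hj0).choose⟩
  apply Finset.card_le_card_of_injOn
    (fun j => (j, if h : ∃ k, M j k ≠ 0 then h.choose else Classical.ofNonempty))
  · intro j hj
    simp only [Finset.mem_coe, Finset.mem_filter, Finset.mem_univ, true_and] at hj ⊢
    have h := hex j hj
    rw [dif_pos h]
    exact h.choose_spec
  · intro a _ b _ hab
    exact congrArg Prod.fst hab

theorem stmt6 {r1 n1 r2 n2 : ℕ}
    (H1 : Matrix (Fin r1) (Fin n1) (ZMod 2)) (H2 : Matrix (Fin r2) (Fin n2) (ZMod 2))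
    (Z1 : Matrix (Fin n1) (Fin n2) (ZMod 2)) (Z2 : Matrix (Fin r1) (Fin r2) (ZMod 2))
    (Lc : Fin n2 → ZMod 2) (hLc : H2.mulVec Lc = 0) :
    wt (H1.mulVec (Z1.mulVec Lc)) ≤ mwt (H1 * Z1 + Z2 * H2) := by
  have key : H1.mulVec (Z1.mulVec Lc) = (H1 * Z1 + Z2 * H2).mulVec Lc := by
    rw [Matrix.add_mulVec, ← Matrix.mulVec_mulVec, ← Matrix.mulVec_mulVec, hLc,
      Matrix.mulVec_zero, add_zero]
  rw [key]
  exact wt_mulVec_le_mwt _ _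
end

section
/- Let H_1 (r_1×n_1) and H_2 (r_2×n_2) be matrices over F_2, and let H_X = (H_1 ⊗ I_{n_2} | I_{r_1} ⊗ H_2^T). Fix a column index α ∈ {1,...,n_2} and a codeword x̄ ∈ ker(H_1). Consider the vector L = (x̄ ⊗ e_α, 0) ∈ F_2^{n_1 n_2 + r_1 r_2}. Then for any single-bit-flip path 0 = v_0, v_1, ..., v_F = L in which every v_i is supported on coordinates {(i,α) : 1 ≤ i ≤ n_1} (the column-α block of the first component), writing v_i = (u_i ⊗ e_α, 0) with u_i ∈ F_2^{n_1}, the energy satisfies wt(H_X·v_i) = wt(H_1·u_i). Consequently the maximum energy along any such path is at least Δ_{H_1}(x̄), the classical energy barrier of x̄ with respect to H_1. -/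
open Matrix Kronecker

lemma wt_sumElim {A B : Type*} [Fintype A] [Fintype B] (f : A → ZMod 2) :
    wt (Sum.elim f (0 : B → ZMod 2)) = wt f := by
  unfold wt
  refine (Finset.card_bij (fun a _ => Sum.inl a) ?_ ?_ ?_).symm
  · intro a ha; simpa using (Finset.mem_filter.mp ha).2
  · intro a _ b _ h; simpa using h
  · rintro (a | b) hx
    · exact ⟨a, by simpa using (Finset.mem_filter.mp hx).2, rfl⟩
    · simp at hx

lemma wt_col {A B : Type*} [Fintype A] [Fintype B] [DecidableEq B] (α : B) (w : A → ZMod 2) :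
    wt (fun p : A × B => if p.2 = α then w p.1 else 0) = wt w := by
  unfold wt
  refine (Finset.card_bij (fun a _ => (a, α)) ?_ ?_ ?_).symm
  · intro a ha; simpa using (Finset.mem_filter.mp ha).2
  · intro a _ b _ h; simpa using congrArg Prod.fst h
  · rintro ⟨a, b⟩ hx
    have := (Finset.mem_filter.mp hx).2
    have hb : b = α := by by_contra hc; simp [hc] at this
    subst hb
    exact ⟨a, by simpa using this, rfl⟩

lemma mulVec_col {r1 n1 r2 n2 : ℕ} (H1 : Matrix (Fin r1) (Fin n1) (ZMod 2))
    (H2 : Matrix (Fin r2) (Fin n2) (ZMod 2)) (α : Fin n2) (w : Fin n1 → ZMod 2) :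
    (HX H1 H2).mulVec (Sum.elim (fun p => if p.2 = α then w p.1 else 0) 0) =
      fun q => if q.2 = α then H1.mulVec w q.1 else 0 := by
  funext q
  obtain ⟨r, β⟩ := q
  simp only [HX, Matrix.fromCols_mulVec_sumElim, Matrix.mulVec_zero, Pi.add_apply,
    Pi.zero_apply, add_zero]
  simp only [Matrix.mulVec, dotProduct, Fintype.sum_prod_type, kroneckerMap_apply,
    Matrix.one_apply, mul_ite, ite_mul, one_mul, zero_mul, mul_zero, mul_one]
  simp [Finset.sum_ite_eq, eq_comm]

theorem stmt9 {r1 n1 r2 n2 F : ℕ}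
    (H1 : Matrix (Fin r1) (Fin n1) (ZMod 2)) (H2 : Matrix (Fin r2) (Fin n2) (ZMod 2))
    (α : Fin n2) (xbar : Fin n1 → ZMod 2) (hx : H1.mulVec xbar = 0)
    (v : Fin (F + 1) → (Fin n1 × Fin n2) ⊕ (Fin r1 × Fin r2) → ZMod 2)
    (u : Fin (F + 1) → Fin n1 → ZMod 2)
    (hform : ∀ i, v i = Sum.elim (fun p => if p.2 = α then u i p.1 else 0) 0)
    (h0 : v 0 = 0)
    (hlast : v (Fin.last F) = Sum.elim (fun p => if p.2 = α then xbar p.1 else 0) 0)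
    (hstep : ∀ i : Fin F, wt (v i.castSucc + v i.succ) ≤ 1) :
    (∀ i, wt ((HX H1 H2).mulVec (v i)) = wt (H1.mulVec (u i))) ∧
    eb H1 xbar ≤ Finset.univ.sup (fun i => wt ((HX H1 H2).mulVec (v i))) := by
  have henergy : ∀ i, wt ((HX H1 H2).mulVec (v i)) = wt (H1.mulVec (u i)) := by
    intro i
    rw [hform i, mulVec_col H1 H2 α (u i), wt_col]
  refine ⟨henergy, ?_⟩
  apply Nat.sInf_le
  refine ⟨F, u, ?_, ?_, ?_, ?_⟩
  · funext j
    have h := congrFun ((hform 0).symm.trans h0) (Sum.inl (j, α))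
    simpa using h
  · funext j
    have h := congrFun ((hform (Fin.last F)).symm.trans hlast) (Sum.inl (j, α))
    simpa using h
  · intro i
    have hv : v i.castSucc + v i.succ =
        Sum.elim (fun p : Fin n1 × Fin n2 =>
          if p.2 = α then (u i.castSucc + u i.succ) p.1 else 0) 0 := by
      rw [hform, hform]
      funext x
      rcases x with ⟨j, γ⟩ | y
      · by_cases h : γ = α <;> simp [h]
      · simp
    have := hstep i
    rw [hv, wt_sumElim, wt_col] at this
    exact this
  · intro i
    rw [← henergy i]
    exact Finset.le_sup (f := fun i => wt ((HX H1 H2).mulVec (v i))) (Finset.mem_univ i)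
end

section
/- Let H_1 (r_1×n_1) and H_2 (r_2×n_2) be matrices over F_2, H_X = (H_1 ⊗ I_{n_2} | I_{r_1} ⊗ H_2^T), and let x̄ ∈ ker(H_1), α ∈ {1,...,n_2}. Then the energy barrier of L = (x̄ ⊗ e_α, 0) with respect to H_X satisfies Δ_{H_X}(L) ≤ Δ_{H_1}(x̄): any classical path 0 = u_0,...,u_F = x̄ achieving the classical energy barrier lifts to a quantum path 0 = (u_0 ⊗ e_α, 0), ..., (u_F ⊗ e_α, 0) = L with the same maximum energy. -/
open Matrix Kronecker

lemma wt_lift {n m : Type*} [Fintype n] [Fintype m] [DecidableEq n] [DecidableEq m]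
    (a : m) (u : n → ZMod 2) :
    wt (fun q : n × m => if q.2 = a then u q.1 else 0) = wt u := by
  unfold wt
  rw [show (Finset.univ.filter fun q : n × m => (if q.2 = a then u q.1 else 0) ≠ 0)
      = (Finset.univ.filter fun j : n => u j ≠ 0).image (fun j => (j, a)) from ?_]
  · rw [Finset.card_image_of_injective _ (fun x y h => (Prod.mk.injEq _ _ _ _ ▸ h).1)]
  · ext ⟨j, γ⟩
    simp only [Finset.mem_filter, Finset.mem_univ, true_and, Finset.mem_image, Prod.mk.injEq]
    constructor
    · intro h
      split_ifs at h with hc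
      · exact ⟨j, h, rfl, hc.symm⟩
      · simp at h
    · rintro ⟨j', hj', rfl, rfl⟩
      simpa using hj'

lemma wt_lift_sum {n m γ : Type*} [Fintype n] [Fintype m] [Fintype γ]
    [DecidableEq n] [DecidableEq m] [DecidableEq γ]
    (a : m) (u : n → ZMod 2) :
    wt (Sum.elim (fun q : n × m => if q.2 = a then u q.1 else 0) (0 : γ → ZMod 2)) = wt u := by
  rw [← wt_lift a u]
  unfold wt
  rw [show (Finset.univ.filter fun q : (n × m) ⊕ γ =>
      Sum.elim (fun q : n × m => if q.2 = a then u q.1 else 0) (0 : γ → ZMod 2) q ≠ 0)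
      = (Finset.univ.filter fun q : n × m => (if q.2 = a then u q.1 else 0) ≠ 0).image Sum.inl from ?_]
  · exact Finset.card_image_of_injective _ Sum.inl_injective
  · ext q
    cases q <;> simp

lemma hx_mulVec {r1 n1 r2 n2 : ℕ} (H1 : Matrix (Fin r1) (Fin n1) (ZMod 2))
    (H2 : Matrix (Fin r2) (Fin n2) (ZMod 2)) (α : Fin n2) (u : Fin n1 → ZMod 2) :
    (Matrix.fromCols (H1 ⊗ₖ (1 : Matrix (Fin n2) (Fin n2) (ZMod 2)))
      ((1 : Matrix (Fin r1) (Fin r1) (ZMod 2)) ⊗ₖ H2ᵀ)).mulVec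
      (Sum.elim (fun p : Fin n1 × Fin n2 => if p.2 = α then u p.1 else 0)
        (0 : Fin r1 × Fin r2 → ZMod 2))
    = fun q : Fin r1 × Fin n2 => if q.2 = α then (H1.mulVec u) q.1 else 0 := by
  rw [Matrix.fromCols_mulVec_sumElim, Matrix.mulVec_zero, add_zero]
  funext ⟨i, β⟩
  simp only [Matrix.mulVec, dotProduct, Fintype.sum_prod_type,
    Matrix.kroneckerMap_apply, Matrix.one_apply, mul_ite, ite_mul, one_mul, zero_mul,
    mul_zero, mul_one]
  simp [Finset.sum_ite_eq, Finset.sum_ite_eq', eq_comm]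

lemma eb_set_nonempty {r n : ℕ} (H : Matrix (Fin r) (Fin n) (ZMod 2)) (s : Fin n → ZMod 2) :
    {B | ∃ F : ℕ, ∃ v : Fin (F + 1) → Fin n → ZMod 2,
      v 0 = 0 ∧ v (Fin.last F) = s ∧
      (∀ i : Fin F, wt (v i.castSucc + v i.succ) ≤ 1) ∧
      ∀ i, wt (H.mulVec (v i)) ≤ B}.Nonempty := by
  refine ⟨r, n, fun k j => if (j : ℕ) < (k : ℕ) then s j else 0, ?_, ?_, ?_, ?_⟩
  · funext j; simp
  · funext j; simp [j.isLt]
  · intro i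
    have hsub : (Finset.univ.filter fun j : Fin n =>
        ((fun k : Fin (n+1) => fun j' : Fin n => if (j' : ℕ) < (k : ℕ) then s j' else 0) i.castSucc
          + (fun k : Fin (n+1) => fun j' : Fin n => if (j' : ℕ) < (k : ℕ) then s j' else 0) i.succ) j ≠ 0)
        ⊆ {i} := by
      intro j hj
      simp only [Finset.mem_filter, Finset.mem_univ, true_and, Pi.add_apply] at hj
      simp only [Finset.mem_singleton]
      by_contra hne
      apply hj
      have hiff : ((j : ℕ) < (i.castSucc : ℕ)) ↔ ((j : ℕ) < (i.succ : ℕ)) := by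
        simp only [Fin.coe_castSucc, Fin.val_succ]
        have hne' : (j : ℕ) ≠ (i : ℕ) := fun h => hne (Fin.ext h)
        constructor
        · exact fun h => Nat.lt_succ_of_lt h
        · exact fun hlt => (Nat.lt_succ_iff_lt_or_eq.mp hlt).elim id (fun h => absurd h hne')
      rw [if_congr hiff rfl rfl]
      exact CharTwo.add_self_eq_zero _
    calc _ ≤ ({i} : Finset (Fin n)).card := Finset.card_le_card hsub
    _ = 1 := Finset.card_singleton i
  · intro i
    calc wt (H.mulVec _) ≤ Finset.univ.card := Finset.card_filter_le _ _
    _ = r := by simp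

theorem stmt10 {r1 n1 r2 n2 : ℕ}
    (H1 : Matrix (Fin r1) (Fin n1) (ZMod 2)) (H2 : Matrix (Fin r2) (Fin n2) (ZMod 2))
    (xbar : Fin n1 → ZMod 2) (hx : H1.mulVec xbar = 0) (α : Fin n2) :
    eb (HX H1 H2)
      (Sum.elim (fun p : Fin n1 × Fin n2 => if p.2 = α then xbar p.1 else 0)
        (0 : Fin r1 × Fin r2 → ZMod 2)) ≤ eb H1 xbar := by
  have hmem := Nat.sInf_mem (eb_set_nonempty H1 xbar)
  obtain ⟨F, v, h0, hl, hstep, hB⟩ := hmem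
  set L : Fin (F+1) → ((Fin n1 × Fin n2) ⊕ (Fin r1 × Fin r2)) → ZMod 2 :=
    fun k => Sum.elim (fun p : Fin n1 × Fin n2 => if p.2 = α then v k p.1 else 0) 0 with hL
  apply Nat.sInf_le
  refine ⟨F, L, ?_, ?_, ?_, ?_⟩
  · funext q; cases q <;> simp [hL, h0]
  · funext q; cases q <;> simp [hL, hl]
  · intro i
    have : L i.castSucc + L i.succ
        = Sum.elim (fun p : Fin n1 × Fin n2 =>
            if p.2 = α then (v i.castSucc + v i.succ) p.1 else 0) 0 := by
      funext q
      cases q with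
      | inl p => simp only [hL, Pi.add_apply, Sum.elim_inl]; split_ifs <;> simp
      | inr p => simp [hL]
    rw [this, wt_lift_sum]
    exact hstep i
  · intro i
    show wt ((HX H1 H2).mulVec (L i)) ≤ _
    rw [hL]
    unfold HX
    rw [hx_mulVec, wt_lift]
    exact hB i
end

section
/- Let H_1 (r_1×n_1) and H_2 (r_2×n_2) be matrices over F_2 and H_X = (H_1 ⊗ I_{n_2} | I_{r_1} ⊗ H_2^T). Let b̄ ∈ ker applied to the transpose: H_2^T·b̄ = 0 with b̄ ∈ F_2^{r_2}, and let β ∈ {1,...,r_1}. Then the energy barrier of L = (0, e_β ⊗ b̄) with respect to H_X satisfies Δ_{H_X}(L) ≤ Δ_{H_2^T}(b̄). -/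
open Matrix Kronecker

section Aux

variable {r1 n1 r2 n2 : ℕ}

private lemma wt_le_card {α : Type*} [Fintype α] (v : α → ZMod 2) : wt v ≤ Fintype.card α :=
  le_trans (Finset.card_filter_le _ _) (by simp)

private lemma wt_embed_sum (β : Fin r1) (w : Fin r2 → ZMod 2) :
    wt (Sum.elim (0 : Fin n1 × Fin n2 → ZMod 2)
      (fun p : Fin r1 × Fin r2 => if p.1 = β then w p.2 else 0)) = wt w := by
  unfold wt
  rw [show (Finset.univ.filter fun i : (Fin n1 × Fin n2) ⊕ (Fin r1 × Fin r2) =>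
      Sum.elim (0 : Fin n1 × Fin n2 → ZMod 2)
        (fun p : Fin r1 × Fin r2 => if p.1 = β then w p.2 else 0) i ≠ 0)
      = (Finset.univ.filter fun j : Fin r2 => w j ≠ 0).image (fun j => Sum.inr (β, j)) from ?_]
  · exact Finset.card_image_of_injective _ (fun a b h => by simpa using h)
  · ext i
    rcases i with i | ⟨a, j⟩ <;> simp [eq_comm]
    rcases eq_or_ne β a with rfl | hne
    · simp [eq_comm]
    · simp [hne]

private lemma wt_embed_prod (β : Fin r1) (u : Fin r2 → ZMod 2) :
    wt (fun q : Fin r1 × Fin r2 => if q.1 = β then u q.2 else 0) = wt u := by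
  unfold wt
  rw [show (Finset.univ.filter fun q : Fin r1 × Fin r2 => (if q.1 = β then u q.2 else 0) ≠ 0)
      = (Finset.univ.filter fun j : Fin r2 => u j ≠ 0).image (fun j => (β, j)) from ?_]
  · exact Finset.card_image_of_injective _ (fun a b h => by simpa using h)
  · ext ⟨a, j⟩
    simp [eq_comm]
    rcases eq_or_ne β a with rfl | hne
    · simp [eq_comm]
    · simp [hne]

private lemma HX_mulVec_embed (H1 : Matrix (Fin r1) (Fin n1) (ZMod 2))
    (H2 : Matrix (Fin r2) (Fin n2) (ZMod 2)) (β : Fin r1) (w : Fin r2 → ZMod 2) :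
    (HX H1 H2).mulVec
      (Sum.elim (0 : Fin n1 × Fin n2 → ZMod 2)
        (fun p : Fin r1 × Fin r2 => if p.1 = β then w p.2 else 0))
    = fun q : Fin r1 × Fin n2 => if q.1 = β then H2ᵀ.mulVec w q.2 else 0 := by
  funext q
  obtain ⟨a, c⟩ := q
  simp [HX, Matrix.mulVec, dotProduct, Fintype.sum_sum_type, Fintype.sum_prod_type,
    Matrix.fromCols, Matrix.kroneckerMap_apply, Matrix.one_apply, ite_and,
    Finset.sum_ite_eq, Finset.sum_ite_eq', mul_ite]

private lemma embed_add (β : Fin r1) (x y : Fin r2 → ZMod 2) :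
    (Sum.elim (0 : Fin n1 × Fin n2 → ZMod 2)
        (fun p : Fin r1 × Fin r2 => if p.1 = β then x p.2 else 0))
      + (Sum.elim (0 : Fin n1 × Fin n2 → ZMod 2)
        (fun p : Fin r1 × Fin r2 => if p.1 = β then y p.2 else 0))
    = Sum.elim (0 : Fin n1 × Fin n2 → ZMod 2)
        (fun p : Fin r1 × Fin r2 => if p.1 = β then (x + y) p.2 else 0) := by
  funext q
  rcases q with q | ⟨a, j⟩
  · simp
  · by_cases h : a = β <;> simp [h]

end Aux

theorem stmt11 {r1 n1 r2 n2 : ℕ}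
    (H1 : Matrix (Fin r1) (Fin n1) (ZMod 2)) (H2 : Matrix (Fin r2) (Fin n2) (ZMod 2))
    (bbar : Fin r2 → ZMod 2) (hb : H2ᵀ.mulVec bbar = 0) (β : Fin r1) :
    eb (HX H1 H2)
      (Sum.elim (0 : Fin n1 × Fin n2 → ZMod 2)
        (fun p : Fin r1 × Fin r2 => if p.1 = β then bbar p.2 else 0)) ≤ eb H2ᵀ bbar := by
  have hne : Set.Nonempty {B | ∃ F : ℕ, ∃ v : Fin (F + 1) → Fin r2 → ZMod 2,
      v 0 = 0 ∧ v (Fin.last F) = bbar ∧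
      (∀ i : Fin F, wt (v i.castSucc + v i.succ) ≤ 1) ∧
      ∀ i, wt (H2ᵀ.mulVec (v i)) ≤ B} := by
    refine ⟨n2, r2, fun i j => if (j : ℕ) < (i : ℕ) then bbar j else 0, ?_, ?_, ?_, ?_⟩
    · funext j; simp
    · funext j; simp [j.isLt]
    · intro i
      unfold wt
      refine le_trans (Finset.card_le_card ?_) (by simp : ({i} : Finset (Fin r2)).card ≤ 1)
      intro j hj
      simp only [Finset.mem_filter, Finset.mem_univ, true_and, Pi.add_apply] at hj
      simp only [Finset.mem_singleton]
      by_contra hji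
      apply hj
      rcases lt_or_ge (j : ℕ) (i : ℕ) with h | h
      · have h2 : (j : ℕ) < (i.succ : ℕ) := by simp; omega
        have h1 : (j : ℕ) < (i.castSucc : ℕ) := by simpa using h
        rw [if_pos h1, if_pos h2]
        exact CharTwo.add_self_eq_zero _
      · have hji' : (j : ℕ) ≠ (i : ℕ) := fun e => hji (Fin.ext e)
        have h1 : ¬ (j : ℕ) < (i.castSucc : ℕ) := by simp; omega
        have h2 : ¬ (j : ℕ) < (i.succ : ℕ) := by simp; omega
        rw [if_neg h1, if_neg h2, add_zero]
    · intro i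
      exact le_trans (wt_le_card _) (by simp)
  obtain ⟨F, v, h0, hlast, hflip, hE⟩ := Nat.sInf_mem hne
  apply Nat.sInf_le
  refine ⟨F, fun i => Sum.elim (0 : Fin n1 × Fin n2 → ZMod 2)
      (fun p : Fin r1 × Fin r2 => if p.1 = β then v i p.2 else 0), ?_, ?_, ?_, ?_⟩
  · funext q; rcases q with q | ⟨a, j⟩ <;> simp [h0]
  · simp only [hlast]
  · intro i
    rw [embed_add, wt_embed_sum]
    exact hflip i
  · intro i
    rw [HX_mulVec_embed, wt_embed_prod]
    exact hE i
end

section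
/- Let H_1 (r_1×n_1), H_2 (r_2×n_2) be matrices over F_2 and H_X = (H_1 ⊗ I_{n_2} | I_{r_1} ⊗ H_2^T). Fix a codeword L_c ∈ ker(H_2) and α in the support of L_c. Define the deformation map D : F_2^{n_1 n_2 + r_1 r_2} → F_2^{n_1 n_2 + r_1 r_2} by D(z^{(1)}, z^{(2)}) = (Z^{(1)}·L_c ⊗ e_α viewed as the vector supported on column α, 0), where Z^{(1)} is the n_1×n_2 reshaping of z^{(1)}. Then for every z, wt(H_X·D(z)) ≤ wt(H_X·z), and for any two vectors z, z' differing in at most one coordinate, D(z) and D(z') differ in at most one coordinate. -/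
open Matrix Kronecker

/-- The deformation map sending `z` to the vector supported on column `α` of the first
block whose column-`α` entries are the sum of the columns of `Z^{(1)}` in the support of `Lc`. -/
def deform {n1 n2 r1 r2 : ℕ} (Lc : Fin n2 → ZMod 2) (α : Fin n2)
    (z : (Fin n1 × Fin n2) ⊕ (Fin r1 × Fin r2) → ZMod 2) :
    (Fin n1 × Fin n2) ⊕ (Fin r1 × Fin r2) → ZMod 2 :=
  Sum.elim (fun p => if p.2 = α then ∑ j, z (Sum.inl (p.1, j)) * Lc j else 0) 0

theorem stmt12 {r1 n1 r2 n2 : ℕ}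
    (H1 : Matrix (Fin r1) (Fin n1) (ZMod 2)) (H2 : Matrix (Fin r2) (Fin n2) (ZMod 2))
    (Lc : Fin n2 → ZMod 2) (hLc : H2.mulVec Lc = 0) (α : Fin n2) (hα : Lc α = 1) :
    (∀ z : (Fin n1 × Fin n2) ⊕ (Fin r1 × Fin r2) → ZMod 2,
      wt ((HX H1 H2).mulVec (deform Lc α z)) ≤ wt ((HX H1 H2).mulVec z)) ∧
    (∀ z z' : (Fin n1 × Fin n2) ⊕ (Fin r1 × Fin r2) → ZMod 2,
      wt (z + z') ≤ 1 → wt (deform Lc α z + deform Lc α z') ≤ 1) := by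
  
  have h0 : ∀ c, ∑ j, H2 c j * Lc j = 0 := by
    intro c
    have := congrFun hLc c
    simpa [Matrix.mulVec, dotProduct] using this
  constructor
  · intro z
    have hM : ∀ i β, (HX H1 H2).mulVec z (i, β)
        = ∑ a, H1 i a * z (Sum.inl (a, β)) + ∑ c, H2 c β * z (Sum.inr (i, c)) := by
      intro i β
      simp [HX, Matrix.mulVec, Matrix.fromCols, dotProduct, Fintype.sum_sum_type,
        Fintype.sum_prod_type, Matrix.one_apply, ite_mul, mul_ite, Finset.sum_ite_eq,
        Finset.sum_ite_eq']
    set s : Fin r1 → ZMod 2 := fun i => ∑ j, (HX H1 H2).mulVec z (i, j) * Lc j with hs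
    have hD : ∀ p : Fin r1 × Fin n2, (HX H1 H2).mulVec (deform Lc α z) p
        = if p.2 = α then s p.1 else 0 := by
      rintro ⟨i, β⟩
      have h1 : (HX H1 H2).mulVec (deform Lc α z) (i, β)
          = ∑ a, H1 i a * (if β = α then ∑ j, z (Sum.inl (a, j)) * Lc j else 0) := by
        simp [HX, deform, Matrix.mulVec, Matrix.fromCols, dotProduct, Fintype.sum_sum_type,
          Fintype.sum_prod_type, Matrix.one_apply, ite_mul, mul_ite, Finset.sum_ite_eq,
          Finset.sum_ite_eq']
      rw [h1]
      by_cases hβ : β = α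
      · simp only [hβ, eq_self_iff_true, if_true]
        have key : s i = ∑ a, H1 i a * ∑ j, z (Sum.inl (a, j)) * Lc j := by
          have A : ∑ j, (∑ a, H1 i a * z (Sum.inl (a, j))) * Lc j
              = ∑ a, H1 i a * ∑ j, z (Sum.inl (a, j)) * Lc j := by
            simp only [Finset.sum_mul, Finset.mul_sum]
            rw [Finset.sum_comm]
            exact Finset.sum_congr rfl fun a _ => Finset.sum_congr rfl fun j _ => by ring
          have B : ∑ j, (∑ c, H2 c j * z (Sum.inr (i, c))) * Lc j = 0 := by
            simp only [Finset.sum_mul]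
            rw [Finset.sum_comm]
            have : ∀ c, ∑ j, H2 c j * z (Sum.inr (i, c)) * Lc j
                = z (Sum.inr (i, c)) * ∑ j, H2 c j * Lc j := by
              intro c; rw [Finset.mul_sum]; exact Finset.sum_congr rfl fun j _ => by ring
            simp [this, h0]
          calc s i = ∑ j, ((∑ a, H1 i a * z (Sum.inl (a, j)))
                + ∑ c, H2 c j * z (Sum.inr (i, c))) * Lc j := by
                  simp only [hs, hM]
            _ = (∑ j, (∑ a, H1 i a * z (Sum.inl (a, j))) * Lc j)
                + ∑ j, (∑ c, H2 c j * z (Sum.inr (i, c))) * Lc j := by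
                  simp [add_mul, Finset.sum_add_distrib]
            _ = _ := by rw [A, B, add_zero]
        rw [key]
      · simp [hβ]
    have hex : ∀ i, s i ≠ 0 → ∃ j, (HX H1 H2).mulVec z (i, j) ≠ 0 := by
      intro i hi
      by_contra h
      push_neg at h
      exact hi (by simp only [hs]; exact Finset.sum_eq_zero fun j _ => by rw [h j, zero_mul])
    unfold wt
    apply Finset.card_le_card_of_injOn
      (fun p => (p.1, if h : ∃ j, (HX H1 H2).mulVec z (p.1, j) ≠ 0 then h.choose else α))
    · intro p hp
      simp only [Finset.mem_coe, Finset.mem_filter, Finset.mem_univ, true_and] at hp ⊢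
      rw [hD p] at hp
      have hpa : p.2 = α := by by_contra h; simp [h] at hp
      have hsp : s p.1 ≠ 0 := by simpa [hpa] using hp
      have he := hex p.1 hsp
      rw [dif_pos he]
      exact he.choose_spec
    · intro p hp q hq hpq
      simp only [Finset.coe_filter, Finset.mem_coe, Finset.mem_filter, Set.mem_setOf_eq,
        Finset.mem_univ, true_and] at hp hq
      rw [hD p] at hp; rw [hD q] at hq
      have hpa : p.2 = α := by by_contra h; simp [h] at hp
      have hqa : q.2 = α := by by_contra h; simp [h] at hq
      simp only at hpq
      have : p.1 = q.1 := (Prod.ext_iff.mp hpq).1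
      exact Prod.ext this (hpa.trans hqa.symm)
  · intro z z' h
    have hadd : deform Lc α z + deform Lc α z' = deform Lc α (z + z') := by
      funext p
      cases p with
      | inl q =>
        simp only [deform, Pi.add_apply, Sum.elim_inl]
        split_ifs
        · simp [add_mul, Finset.sum_add_distrib]
        · simp
      | inr q => simp [deform]
    rw [hadd]
    set u := z + z' with hu
    calc wt (deform Lc α u) ≤ wt u := by
          unfold wt
          apply Finset.card_le_card_of_injOn
            (fun p => Sum.elim (fun q : Fin n1 × Fin n2 =>
              Sum.inl (α := Fin n1 × Fin n2) (β := Fin r1 × Fin r2)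
                (q.1, if h : ∃ j, u (Sum.inl (q.1, j)) ≠ 0 then h.choose else α))
              (fun q => Sum.inr q) p)
          · intro p hp
            simp only [Finset.mem_coe, Finset.mem_filter, Finset.mem_univ, true_and] at hp ⊢
            cases p with
            | inl q =>
              simp only [deform, Sum.elim_inl] at hp
              have hq : ∑ j, u (Sum.inl (q.1, j)) * Lc j ≠ 0 := by
                by_contra hc
                apply hp
                split_ifs <;> simp [hc]
              have he : ∃ j, u (Sum.inl (q.1, j)) ≠ 0 := by
                by_contra hc
                push_neg at hc
                exact hq (Finset.sum_eq_zero fun j _ => by rw [hc j, zero_mul])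
              simp only [Sum.elim_inl, dif_pos he]
              exact he.choose_spec
            | inr q => simp [deform] at hp
          · intro p hp q hq hpq
            simp only [Finset.coe_filter, Finset.mem_coe, Finset.mem_filter, Set.mem_setOf_eq,
              Finset.mem_univ, true_and] at hp hq
            cases p with
            | inl p' =>
              cases q with
              | inl q' =>
                simp only [deform, Sum.elim_inl] at hp hq hpq
                have hpa : p'.2 = α := by by_contra hh; simp [hh] at hp
                have hqa : q'.2 = α := by by_contra hh; simp [hh] at hq
                have h1 : p'.1 = q'.1 := by
                  have h2 := Sum.inl.inj hpq
                  exact (Prod.ext_iff.mp h2).1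
                exact congrArg Sum.inl (Prod.ext h1 (hpa.trans hqa.symm))
              | inr q' => simp [deform] at hq
            | inr p' => simp [deform] at hp
      _ ≤ 1 := h
end
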